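/- Let L* be the Laplacian (with signed degrees) of a connected undirected weighted graph on n ≥ 3 vertices in which vertex 1 is connected to every other vertex with the same weight α ≠ 0, and the subgraph on vertices 2,...,n has a Laplacian L_f for which the all-ones vector 1_{n-1} is an eigenvector. Then with single input B = e_1, the dimension of the controllable subspace of (-L*, e_1), i.e., rank of [e_1, -L*e_1, ..., (-L*)^{n-1}e_1], equals 2. -/

import Mathlib

open Matrix

/-- Kalman matrix over an arbitrary fintype index. -/
def kalman' {ι : Type*} [Fintype ι] [DecidableEq ι] {m : ℕ}
    (M : Matrix ι ι ℝ) (B : Matrix ι (Fin m) ℝ) :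
    Matrix ι (Fin (Fintype.card ι) × Fin m) ℝ :=
  Matrix.of fun i p => (M ^ (p.1 : ℕ) * B) i p.2

/-- for the Laplacian of a graph expanded from a T-star graph
(vertex `1` joined to every other vertex with identical weight `α ≠ 0`, and the
follower block `L_f` having the all-ones vector as an eigenvector), the
controllable subspace of `(-L*, e₁)` has dimension exactly `2`. -/
theorem tstar_controllable_subspace_dim_two {m : ℕ} (hm : 2 ≤ m)
    (α μ : ℝ) (hα : α ≠ 0)
    (Lf : Matrix (Fin m) (Fin m) ℝ) (hLf : Lf.IsSymm)
    (hone : Lf.mulVec (fun _ => (1 : ℝ)) = μ • (fun _ => (1 : ℝ))) :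
    letI L : Matrix (Unit ⊕ Fin m) (Unit ⊕ Fin m) ℝ :=
      Matrix.fromBlocks (Matrix.of fun _ _ => α * m) (Matrix.of fun _ _ => α)
        (Matrix.of fun _ _ => α) Lf
    letI e₁ : Matrix (Unit ⊕ Fin m) (Fin 1) ℝ :=
      Matrix.of fun i _ => if i = Sum.inl () then 1 else 0
    (kalman' (-L) e₁).rank = 2 := by
  classical
  set L : Matrix (Unit ⊕ Fin m) (Unit ⊕ Fin m) ℝ :=
    Matrix.fromBlocks (Matrix.of fun _ _ => α * m) (Matrix.of fun _ _ => α)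
      (Matrix.of fun _ _ => α) Lf with hL
  set e₁ : Matrix (Unit ⊕ Fin m) (Fin 1) ℝ :=
    Matrix.of fun i _ => if i = Sum.inl () then 1 else 0 with he₁
  set u : (Unit ⊕ Fin m) → ℝ := fun i => if i = Sum.inl () then 1 else 0 with hu_def
  set w : (Unit ⊕ Fin m) → ℝ := Sum.elim (fun _ => 0) (fun _ => 1) with hw_def
  have hLu : L.mulVec u = (α * m) • u + α • w := by
    funext i
    cases i with
    | inl i =>
        simp [L, u, w, Matrix.mulVec, dotProduct, Fintype.sum_sum_type,
          Matrix.fromBlocks]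
    | inr i =>
        simp [L, u, w, Matrix.mulVec, dotProduct, Fintype.sum_sum_type,
          Matrix.fromBlocks]
  have hLw : L.mulVec w = (α * m) • u + μ • w := by
    funext i
    cases i with
    | inl i =>
        simp [L, u, w, Matrix.mulVec, dotProduct, Fintype.sum_sum_type,
          Matrix.fromBlocks, mul_comm]
    | inr i =>
        have := congrFun hone i
        simp [Matrix.mulVec, dotProduct] at this
        simp [L, u, w, Matrix.mulVec, dotProduct, Fintype.sum_sum_type,
          Matrix.fromBlocks, this]
  have key : ∀ k : ℕ, ∃ a b : ℝ, ((-L) ^ k).mulVec u = a • u + b • w := by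
    intro k
    induction k with
    | zero => exact ⟨1, 0, by simp⟩
    | succ k ih =>
        obtain ⟨a, b, ih⟩ := ih
        refine ⟨-(a * (α * m) + b * (α * m)), -(a * α + b * μ), ?_⟩
        rw [pow_succ', ← Matrix.mulVec_mulVec, ih, Matrix.mulVec_add,
          Matrix.mulVec_smul, Matrix.mulVec_smul, Matrix.neg_mulVec, Matrix.neg_mulVec,
          hLu, hLw]
        module
  -- columns of the Kalman matrix
  have hcol : ∀ p : Fin (Fintype.card (Unit ⊕ Fin m)) × Fin 1,
      (kalman' (-L) e₁)ᵀ p = ((-L) ^ (p.1 : ℕ)).mulVec u := by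
    intro p
    rfl
  have cardpos : 0 < Fintype.card (Unit ⊕ Fin m) := Fintype.card_pos
  have card1 : 1 < Fintype.card (Unit ⊕ Fin m) := by
    simp only [Fintype.card_sum, Fintype.card_unit, Fintype.card_fin]
    omega
  have hspan : Submodule.span ℝ (Set.range (kalman' (-L) e₁)ᵀ)
      = Submodule.span ℝ (Set.range ![u, w]) := by
    apply le_antisymm
    · rw [Submodule.span_le]
      rintro _ ⟨p, rfl⟩
      rw [hcol p]
      obtain ⟨a, b, hab⟩ := key (p.1 : ℕ)
      rw [hab]
      exact Submodule.add_mem _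
        (Submodule.smul_mem _ _ (Submodule.subset_span ⟨0, rfl⟩))
        (Submodule.smul_mem _ _ (Submodule.subset_span ⟨1, rfl⟩))
    · rw [Submodule.span_le]
      have humem : u ∈ Submodule.span ℝ (Set.range (kalman' (-L) e₁)ᵀ) := by
        have h0 := hcol (⟨0, cardpos⟩, 0)
        simp only [pow_zero, Matrix.one_mulVec] at h0
        exact h0 ▸ Submodule.subset_span ⟨(⟨0, cardpos⟩, 0), rfl⟩
      have hwmem : w ∈ Submodule.span ℝ (Set.range (kalman' (-L) e₁)ᵀ) := by
        have h1 := hcol (⟨1, card1⟩, 0)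
        simp only [pow_one] at h1
        have h1' : (kalman' (-L) e₁)ᵀ (⟨1, card1⟩, 0)
            = (-(α * m)) • u + (-α) • w := by
          rw [h1, Matrix.neg_mulVec, hLu]; module
        have hcmem : ((-(α * m)) • u + (-α) • w : (Unit ⊕ Fin m) → ℝ)
            ∈ Submodule.span ℝ (Set.range (kalman' (-L) e₁)ᵀ) :=
          h1' ▸ Submodule.subset_span ⟨(⟨1, card1⟩, 0), rfl⟩
        have : w = (-α)⁻¹ • (((-(α * m)) • u + (-α) • w) + (α * m) • u) := by
          match_scalars <;> field_simp <;> ring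
        rw [this]
        exact Submodule.smul_mem _ _ (Submodule.add_mem _ hcmem
          (Submodule.smul_mem _ _ humem))
      rintro _ ⟨i, rfl⟩
      fin_cases i
      · exact humem
      · exact hwmem
  have li : LinearIndependent ℝ ![u, w] := by
    rw [LinearIndependent.pair_iff]
    intro s t hst
    have h1 := congrFun hst (Sum.inl ())
    have h2 := congrFun hst (Sum.inr ⟨0, by omega⟩)
    simp [u, w] at h1 h2
    exact ⟨h1, h2⟩
  rw [Matrix.rank_eq_finrank_span_cols,
    show (kalman' (-L) e₁).col = (kalman' (-L) e₁)ᵀ from rfl, hspan, finrank_span_eq_card li,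
    Fintype.card_fin]
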